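/- Fix a finite set J, an element i ∈ J, and nonnegative integers (I_{ji})_{j∈J} with I_{ii} = 0. Let R be the Laurent polynomial ring over ℂ in the variables Y_{j,n} (j ∈ J, n ∈ ℤ). For n ∈ ℤ let A_{i,n} = Y_{i,n+1} Y_{i,n−1} ∏_{j≠i} Y_{j,n}^{−I_{ji}} (an invertible monomial in R). Let M_i be the quotient of the free R-module with basis (e_n)_{n∈ℤ} by the R-submodule generated by all elements e_{n+1} − A_{i,n} e_{n−1} (n ∈ ℤ), and let S_i^−: R → M_i be the unique ℂ-linear derivation with S_i^−(Y_{j,n}) = δ_{ij} Y_{i,n} ē_n for all j ∈ J, n ∈ ℤ (where ē_n is the class of e_n). Then the kernel of S_i^− equals the ℂ-subalgebra of R generated by the elements Y_{j,n}^{±1} for j ∈ J∖{i}, n ∈ ℤ, together with the elements Y_{i,n}(1 + A_{i,n+1}^{−1}) for n ∈ ℤ. -/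

import Mathlib

/-- Exponent lattice of the Laurent polynomial ring in the variables `Y_{j,n}`,
`j ∈ J`, `n ∈ ℤ`: the free abelian group on `J × ℤ`. -/
abbrev LExp (J : Type) : Type := (J × ℤ) →₀ ℤ

/-- The Laurent polynomial ring over `ℂ` in the variables `Y_{j,n}`, `j ∈ J`, `n ∈ ℤ`. -/
abbrev LRing (J : Type) : Type := AddMonoidAlgebra ℂ (LExp J)

/-- The (invertible) monomial with exponent vector `v`. -/
noncomputable def Ym {J : Type} (v : LExp J) : LRing J := AddMonoidAlgebra.single v 1

/-- The exponent vector of `Y_{j,n}^k`. -/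
noncomputable def E {J : Type} (j : J) (n k : ℤ) : LExp J := Finsupp.single (j, n) k

/-- The exponent vector of the monomial
`A_{i,n} = Y_{i,n+1} Y_{i,n−1} ∏_{j≠i} Y_{j,n}^{−I_{ji}}` (here `c j = I_{ji}`). -/
noncomputable def Aexp {J : Type} [Fintype J] [DecidableEq J] (c : J → ℕ) (i : J) (n : ℤ) :
    LExp J :=
  E i (n + 1) 1 + E i (n - 1) 1 - ∑ j ∈ Finset.univ.erase i, E j n (c j : ℤ)

/-- The submodule of relations `e_{n+1} − A_n · e_{n−1}` in the free `R`-module with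
basis `(e_n)_{n ∈ ℤ}`, for a family of monomial exponents `Av : ℤ → LExp J`. -/
noncomputable def scrRel {J : Type} (Av : ℤ → LExp J) :
    Submodule (LRing J) (ℤ →₀ LRing J) :=
  Submodule.span (LRing J)
    {x | ∃ n : ℤ, x =
      Finsupp.single (n + 1) (1 : LRing J) - Ym (Av n) • Finsupp.single (n - 1) (1 : LRing J)}

/-- The target module `M` of the screening operator: the quotient of the free module with
basis `(e_n)_{n ∈ ℤ}` by the relations `e_{n+1} = A_n e_{n−1}`. -/
noncomputable abbrev ScrMod {J : Type} (Av : ℤ → LExp J) : Type :=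
  (ℤ →₀ LRing J) ⧸ scrRel Av

/-- The class `ē_n` of the basis vector `e_n` in the quotient module. -/
noncomputable def ebar {J : Type} (Av : ℤ → LExp J) (n : ℤ) : ScrMod Av :=
  Submodule.Quotient.mk (Finsupp.single n (1 : LRing J))

set_option linter.unusedSectionVars false

namespace Scr
open Finsupp AddMonoidAlgebra

variable {J : Type} [Fintype J] [DecidableEq J] (c : J → ℕ) (i : J)

theorem Ym_mul (v w : LExp J) : Ym v * Ym w = Ym (v + w) := by
  simp [Ym, AddMonoidAlgebra.single_mul_single]

theorem Ym_zero : Ym (0 : LExp J) = 1 := rfl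

theorem Ym_inv (v : LExp J) : Ym v * Ym (-v) = 1 := by
  rw [Ym_mul, add_neg_cancel, Ym_zero]

theorem Ym_pow (v : LExp J) (m : ℕ) : Ym v ^ m = Ym ((m : ℤ) • v) := by
  induction m with
  | zero => simp [Ym_zero]
  | succ m ih => rw [pow_succ, ih, Ym_mul]; congr 1; push_cast; module

theorem Ym_ne_zero (v : LExp J) : Ym v ≠ 0 := by
  intro h
  have := Ym_inv v
  rw [h, zero_mul] at this
  exact zero_ne_one this

theorem mul_Ym_eq_zero {x : LRing J} {v : LExp J} (h : x * Ym v = 0) : x = 0 := by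
  have : x * Ym v * Ym (-v) = 0 := by rw [h, zero_mul]
  rwa [mul_assoc, Ym_inv, mul_one] at this

/-- Telescoping extension of a partial sum to `ℤ`. -/
noncomputable def psum (a : ℤ → LExp J) (m : ℤ) : LExp J :=
  ∑ k ∈ Finset.range m.toNat, a k - ∑ k ∈ Finset.range (-m).toNat, a (-(k + 1))

theorem psum_succ (a : ℤ → LExp J) (m : ℤ) : psum a (m + 1) = psum a m + a m := by
  unfold psum
  rcases le_or_gt 0 m with h | h
  · have h1 : (m + 1).toNat = m.toNat + 1 := by omega
    have h2 : (-(m + 1)).toNat = 0 := by omega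
    have h3 : (-m).toNat = 0 := by omega
    rw [h1, h2, h3, Finset.sum_range_succ]
    have : ((m.toNat : ℤ)) = m := by omega
    rw [this]
    abel
  · have h1 : (m + 1).toNat = 0 := by omega
    have h2 : m.toNat = 0 := by omega
    have h3 : (-m).toNat = (-(m + 1)).toNat + 1 := by omega
    rw [h1, h2, h3, Finset.sum_range_succ]
    have : (-(((-(m + 1)).toNat : ℤ) + 1)) = m := by omega
    rw [this]
    abel


theorem Aexp_apply_i (m s : ℤ) :
    (Aexp c i m) (i, s) = (if s = m + 1 then 1 else 0) + (if s = m - 1 then 1 else 0) := by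
  unfold Aexp E
  rw [Finsupp.sub_apply, Finsupp.add_apply]
  have h0 : (∑ j ∈ Finset.univ.erase i, Finsupp.single (j, m) ((c j : ℤ))) (i, s) = 0 := by
    rw [Finsupp.finset_sum_apply]
    refine Finset.sum_eq_zero fun j hj => ?_
    rw [Finsupp.single_apply, if_neg]
    intro h
    exact (Finset.mem_erase.mp hj).1 (congrArg Prod.fst h)
  rw [h0, sub_zero, Finsupp.single_apply, Finsupp.single_apply]
  congr 1
  · by_cases h : s = m + 1
    · rw [if_pos h, if_pos (by rw [h])]
    · rw [if_neg h, if_neg (fun hh => h (congrArg Prod.snd hh).symm)]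
  · by_cases h : s = m - 1
    · rw [if_pos (by rw [h]), if_pos h]
    · rw [if_neg (fun hh => h (congrArg Prod.snd hh).symm), if_neg h]


/-- Cumulative exponents: `F (n+2) = F n + Aexp c i (n+1)`. -/
noncomputable def F (n : ℤ) : LExp J :=
  if Even n then psum (fun m => Aexp c i (2 * m + 1)) (n / 2)
  else psum (fun m => Aexp c i (2 * m + 2)) ((n - 1) / 2)

theorem F_rec (n : ℤ) : F c i (n + 2) = F c i n + Aexp c i (n + 1) := by
  rcases Int.even_or_odd n with h | h
  · have he : Even (n + 2) := by obtain ⟨r, rfl⟩ := h; exact ⟨r + 1, by ring⟩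
    rw [F, F, if_pos he, if_pos h]
    have h2 : (n + 2) / 2 = n / 2 + 1 := by obtain ⟨r, rfl⟩ := h; omega
    rw [h2, psum_succ]
    congr 2
    obtain ⟨r, rfl⟩ := h; omega
  · have he : ¬ Even (n + 2) := by
      obtain ⟨r, rfl⟩ := h; intro ⟨s, hs⟩; omega
    have hne : ¬ Even n := by
      obtain ⟨r, rfl⟩ := h; intro ⟨s, hs⟩; omega
    rw [F, F, if_neg he, if_neg hne]
    have h2 : (n + 2 - 1) / 2 = (n - 1) / 2 + 1 := by obtain ⟨r, rfl⟩ := h; omega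
    rw [h2, psum_succ]
    congr 2
    obtain ⟨r, rfl⟩ := h; omega

theorem F_diff (n : ℤ) (m : ℕ) :
    F c i (n + 2 * m) = F c i n + ∑ k ∈ Finset.range m, Aexp c i (n + 2 * k + 1) := by
  induction m with
  | zero => simp
  | succ m ih =>
    have h : n + 2 * ((m : ℤ) + 1) = (n + 2 * m) + 2 := by ring
    push_cast
    rw [h, F_rec, ih, Finset.sum_range_succ]
    abel

theorem Fdiff_apply_top (n : ℤ) (m : ℕ) (hm : 1 ≤ m) :
    (F c i (n + 2 * m) - F c i n) (i, n + 2 * m) = 1 := by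
  rw [F_diff]
  have h : F c i n + ∑ k ∈ Finset.range m, Aexp c i (n + 2 * k + 1) - F c i n
      = ∑ k ∈ Finset.range m, Aexp c i (n + 2 * k + 1) := by abel
  rw [h, Finsupp.finset_sum_apply]
  have hterm : ∀ k : ℕ, (Aexp c i (n + 2 * k + 1)) (i, n + 2 * m)
      = (if (n + 2 * m : ℤ) = n + 2 * k + 1 + 1 then 1 else 0)
        + (if (n + 2 * m : ℤ) = n + 2 * k + 1 - 1 then 1 else 0) := fun k =>
    Aexp_apply_i c i _ _
  rw [Finset.sum_congr rfl (fun k _ => hterm k)]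
  rw [Finset.sum_eq_single_of_mem (m - 1) (Finset.mem_range.mpr (by omega))]
  · rw [if_pos (by push_cast; omega), if_neg (by push_cast; omega)]; norm_num
  · intro k hk hne
    rw [Finset.mem_range] at hk
    rw [if_neg (by push_cast; omega), if_neg (by push_cast; omega)]; norm_num

theorem Fdiff_apply_high (n : ℤ) (m : ℕ) (s : ℤ) (hs : n + 2 * m < s) :
    (F c i (n + 2 * m) - F c i n) (i, s) = 0 := by
  rw [F_diff]
  have h : F c i n + ∑ k ∈ Finset.range m, Aexp c i (n + 2 * k + 1) - F c i n
      = ∑ k ∈ Finset.range m, Aexp c i (n + 2 * k + 1) := by abel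
  rw [h, Finsupp.finset_sum_apply]
  refine Finset.sum_eq_zero fun k hk => ?_
  rw [Finset.mem_range] at hk
  rw [Aexp_apply_i, if_neg (by push_cast; omega), if_neg (by push_cast; omega)]; norm_num


/-- The Euler operator `Y_{i,n} ∂/∂Y_{i,n}` on coefficients. -/
noncomputable def Th (n : ℤ) (x : LRing J) : LRing J :=
  x.coeff.sum (fun v a => AddMonoidAlgebra.single v ((v (i, n) : ℂ) * a))

theorem Th_single (n : ℤ) (v : LExp J) (a : ℂ) :
    Th i n (AddMonoidAlgebra.single v a) = AddMonoidAlgebra.single v ((v (i, n) : ℂ) * a) :=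
  Finsupp.sum_single_index (by simp)

theorem Th_zero (n : ℤ) : Th i n 0 = 0 := rfl

theorem Th_add (n : ℤ) (x y : LRing J) : Th i n (x + y) = Th i n x + Th i n y := by
  classical
  rw [Th, Th, Th, AddMonoidAlgebra.coeff_add]
  exact Finsupp.sum_add_index (by simp) (by intros; rw [mul_add, AddMonoidAlgebra.single_add])

theorem Th_apply (n : ℤ) (x : LRing J) (u : LExp J) :
    (Th i n x).coeff u = (u (i, n) : ℂ) * x.coeff u := by
  induction x using AddMonoidAlgebra.induction_linear with
  | zero => simp [Th_zero]
  | add f g hf hg =>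
    rw [Th_add, AddMonoidAlgebra.coeff_add, AddMonoidAlgebra.coeff_add, Finsupp.add_apply,
      Finsupp.add_apply, hf, hg, mul_add]
  | single v a =>
    classical
    rw [Th_single]
    by_cases h : v = u
    · subst h; simp
    · rw [AddMonoidAlgebra.coeff_single, Finsupp.single_apply, if_neg h,
        AddMonoidAlgebra.coeff_single, Finsupp.single_apply, if_neg h, mul_zero]

theorem Th_eq_zero_of (n : ℤ) (x : LRing J) (h : ∀ v ∈ x.coeff.support, v (i, n) = 0) :
    Th i n x = 0 := by
  ext u
  rw [Th_apply]
  by_cases hu : u ∈ x.coeff.support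
  · rw [h u hu]; simp
  · rw [Finsupp.notMem_support_iff.mp hu]; simp

theorem Th_const (n : ℤ) (x : LRing J) (e : ℤ) (h : ∀ v ∈ x.coeff.support, v (i, n) = e) :
    Th i n x = (e : ℂ) • x := by
  ext u
  rw [Th_apply, AddMonoidAlgebra.coeff_smul, Finsupp.smul_apply]
  by_cases hu : u ∈ x.coeff.support
  · rw [h u hu]; simp [smul_eq_mul]
  · rw [Finsupp.notMem_support_iff.mp hu]; simp

/-- Projection onto the part of `(i,N)`-degree `k`. -/
noncomputable def pk (N k : ℤ) (x : LRing J) : LRing J :=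
  AddMonoidAlgebra.ofCoeff (x.coeff.filter (fun v => v (i, N) = k))

theorem pk_apply (N k : ℤ) (x : LRing J) (u : LExp J) :
    (pk i N k x).coeff u = if u (i, N) = k then x.coeff u else 0 := rfl

theorem pk_add (N k : ℤ) (x y : LRing J) :
    pk i N k (x + y) = pk i N k x + pk i N k y := by
  simp only [pk, AddMonoidAlgebra.coeff_add, Finsupp.filter_add, AddMonoidAlgebra.ofCoeff_add]

theorem pk_zero (N k : ℤ) : pk i N k 0 = 0 := by
  ext u; rw [pk_apply]; simp

theorem pk_support (N k : ℤ) (x : LRing J) : (pk i N k x).coeff.support ⊆ x.coeff.support := by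
  intro u hu
  rw [Finsupp.mem_support_iff] at hu ⊢
  rw [pk_apply] at hu
  intro h; rw [h] at hu; simp at hu

theorem pk_mul_Ym (N k : ℤ) (x : LRing J) (w : LExp J) :
    pk i N k (x * Ym w) = pk i N (k - w (i, N)) x * Ym w := by
  ext u
  rw [pk_apply, Ym, AddMonoidAlgebra.coeff_mul_single_apply, AddMonoidAlgebra.coeff_mul_single_apply,
    pk_apply, Finsupp.add_apply, Finsupp.neg_apply]
  by_cases h : u (i, N) = k
  · rw [if_pos h, if_pos (by omega)]
  · rw [if_neg h, if_neg (by omega), zero_mul]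

theorem pk_Th (N k n : ℤ) (x : LRing J) : pk i N k (Th i n x) = Th i n (pk i N k x) := by
  ext u
  rw [pk_apply, Th_apply, Th_apply, pk_apply, mul_ite, mul_zero]

theorem pk_const (N k e : ℤ) (x : LRing J) (h : ∀ v ∈ x.coeff.support, v (i, N) = e) :
    pk i N k x = if k = e then x else 0 := by
  ext u
  rw [pk_apply]
  by_cases hu : u ∈ x.coeff.support
  · rw [h u hu]
    by_cases hke : k = e
    · rw [if_pos (by omega), if_pos hke]
    · rw [if_neg (by omega), if_neg hke, AddMonoidAlgebra.coeff_zero, Finsupp.coe_zero,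
        Pi.zero_apply]
  · have hx0 : x.coeff u = 0 := Finsupp.notMem_support_iff.mp hu
    split_ifs <;> simp [hx0]

theorem pk_sum_eq_self (N : ℤ) (x : LRing J) (Ks : Finset ℤ)
    (h : ∀ v ∈ x.coeff.support, v (i, N) ∈ Ks) : ∑ k ∈ Ks, pk i N k x = x := by
  ext u
  rw [AddMonoidAlgebra.coeff_sum, Finsupp.finset_sum_apply]
  simp only [pk_apply]
  rw [Finset.sum_ite_eq Ks (u (i, N)) (fun _ => x.coeff u)]
  by_cases hu : u ∈ x.coeff.support
  · rw [if_pos (h u hu)]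
  · rw [Finsupp.notMem_support_iff.mp hu, ite_self]

theorem pk_eq_zero_of_not_mem (N k : ℤ) (x : LRing J)
    (h : ∀ v ∈ x.coeff.support, v (i, N) ≠ k) : pk i N k x = 0 := by
  ext u
  rw [pk_apply]
  by_cases hu : u ∈ x.coeff.support
  · rw [if_neg (h u hu)]; rfl
  · have hx0 : x.coeff u = 0 := Finsupp.notMem_support_iff.mp hu
    split_ifs <;> simp [hx0]

/-! ### Component maps of the quotient module -/

noncomputable def vfun (n : ℤ) : LRing J × LRing J :=
  if Even n then (Ym (F c i n), 0) else (0, Ym (F c i n))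

noncomputable def phi : (ℤ →₀ LRing J) →ₗ[LRing J] LRing J × LRing J :=
  Finsupp.linearCombination (LRing J) (vfun c i)

theorem vfun_rec (n : ℤ) : vfun c i (n + 1) = Ym (Aexp c i n) • vfun c i (n - 1) := by
  have hF : F c i (n + 1) = F c i (n - 1) + Aexp c i n := by
    have h := F_rec c i (n - 1)
    rwa [show n - 1 + 2 = n + 1 by ring, show n - 1 + 1 = n by ring] at h
  have hY : Ym (F c i (n + 1)) = Ym (Aexp c i n) • Ym (F c i (n - 1)) := by
    rw [smul_eq_mul, Ym_mul, hF]; congr 1; abel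
  rcases Int.even_or_odd (n + 1) with h | h
  · have h' : Even (n - 1) := by obtain ⟨r, hr⟩ := h; exact ⟨r - 1, by omega⟩
    rw [vfun, vfun, if_pos h, if_pos h', Prod.smul_mk, smul_zero, hY]
  · have h' : ¬ Even (n - 1) := by
      obtain ⟨r, hr⟩ := h; rintro ⟨s, hs⟩; omega
    have h'' : ¬ Even (n + 1) := by
      obtain ⟨r, hr⟩ := h; rintro ⟨s, hs⟩; omega
    rw [vfun, vfun, if_neg h'', if_neg h', Prod.smul_mk, smul_zero, hY]

theorem phi_rel : scrRel (Aexp c i) ≤ LinearMap.ker (phi c i) := by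
  rw [scrRel, Submodule.span_le]
  rintro _ ⟨n, rfl⟩
  simp only [SetLike.mem_coe, LinearMap.mem_ker, map_sub, map_smul, phi,
    Finsupp.linearCombination_single, one_smul]
  rw [sub_eq_zero, vfun_rec]

noncomputable def phiq : ScrMod (Aexp c i) →ₗ[LRing J] LRing J × LRing J :=
  Submodule.liftQ _ (phi c i) (phi_rel c i)

theorem phiq_ebar (n : ℤ) : phiq c i (ebar (Aexp c i) n) = vfun c i n := by
  rw [ebar, phiq, Submodule.liftQ_apply, phi, Finsupp.linearCombination_single, one_smul]

theorem ebar_rec (n : ℤ) :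
    ebar (Aexp c i) (n + 2) = Ym (Aexp c i (n + 1)) • ebar (Aexp c i) n := by
  rw [ebar, ebar, ← Submodule.Quotient.mk_smul, Submodule.Quotient.eq]
  refine Submodule.subset_span ⟨n + 1, ?_⟩
  rw [show n + 1 + 1 = n + 2 by ring, show n + 1 - 1 = n by ring]

/-! ### The logarithmic differential -/

noncomputable def lmap (v : LExp J) : ScrMod (Aexp c i) :=
  v.sum fun p k => if p.1 = i then k • ebar (Aexp c i) p.2 else 0

theorem lmap_zero : lmap c i 0 = 0 := by
  rw [lmap, Finsupp.sum_zero_index]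

theorem lmap_single (p : J × ℤ) (k : ℤ) :
    lmap c i (Finsupp.single p k) = if p.1 = i then k • ebar (Aexp c i) p.2 else 0 :=
  Finsupp.sum_single_index (by split_ifs <;> simp)

theorem lmap_add (v w : LExp J) : lmap c i (v + w) = lmap c i v + lmap c i w := by
  classical
  refine Finsupp.sum_add_index (fun p _ => by split_ifs <;> simp) (fun p _ k k' => ?_)
  split_ifs <;> simp [add_smul]

noncomputable def lmapHom : LExp J →+ ScrMod (Aexp c i) :=
  AddMonoidHom.mk' (lmap c i) (lmap_add c i)

theorem lmap_neg (v : LExp J) : lmap c i (-v) = - lmap c i v :=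
  map_neg (lmapHom c i) v

/-! ### Parity projections -/

noncomputable def prE (N : ℤ) : (LRing J × LRing J) →ₗ[LRing J] LRing J :=
  if Even N then LinearMap.fst _ _ _ else LinearMap.snd _ _ _

theorem prE_vfun (N n : ℤ) :
    prE (J := J) N (vfun c i n) = if Even (n - N) then Ym (F c i n) else 0 := by
  by_cases hN : Even N <;> by_cases hn : Even n <;>
    simp [prE, vfun, hN, hn, Int.even_sub]

theorem prE_eq_zero (N : ℤ) (m : LRing J × LRing J)
    (h0 : prE (J := J) N m = 0) (h1 : prE (J := J) (N + 1) m = 0) : m = 0 := by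
  have hNe : Even (N + 1) ↔ ¬ Even N := by
    constructor
    · rintro ⟨r, hr⟩ ⟨s, hs⟩; omega
    · intro h; rcases Int.even_or_odd N with h' | ⟨r, hr⟩
      · exact absurd h' h
      · exact ⟨r + 1, by omega⟩
  by_cases hN : Even N
  · rw [prE, if_pos hN] at h0
    rw [prE, if_neg (by rw [hNe]; exact fun h => h hN)] at h1
    exact Prod.ext h0 h1
  · rw [prE, if_neg hN] at h0
    rw [prE, if_pos (hNe.mpr hN)] at h1
    exact Prod.ext h1 h0

/-! ### Lemmas about the screening operator -/

section Screening

variable (S : LRing J →ₗ[ℂ] ScrMod (Aexp c i))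
variable (hLeib : ∀ x y : LRing J, S (x * y) = x • S y + y • S x)
variable (hval : ∀ (j : J) (n : ℤ),
  S (Ym (E j n 1)) = if j = i then Ym (E i n 1) • ebar (Aexp c i) n else 0)

include hLeib in
theorem S_one : S 1 = 0 := by
  have h := hLeib 1 1
  rw [mul_one, one_smul] at h
  exact (left_eq_add.mp h)

include hLeib hval in
theorem Smono (v : LExp J) : S (Ym v) = Ym v • lmap c i v := by
  have hone : S 1 = 0 := S_one c i S hLeib
  have hP0 : S (Ym (0 : LExp J)) = Ym (0 : LExp J) • lmap c i 0 := by
    rw [Ym_zero, lmap_zero, smul_zero, hone]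
  have hPadd : ∀ v w : LExp J, S (Ym v) = Ym v • lmap c i v →
      S (Ym w) = Ym w • lmap c i w →
      S (Ym (v + w)) = Ym (v + w) • lmap c i (v + w) := by
    intro v w hv hw
    rw [← Ym_mul, hLeib, hv, hw, lmap_add, smul_add, smul_smul, smul_smul,
      Ym_mul, Ym_mul, add_comm w v]
    exact add_comm _ _
  have hPneg : ∀ v : LExp J, S (Ym v) = Ym v • lmap c i v →
      S (Ym (-v)) = Ym (-v) • lmap c i (-v) := by
    intro v hv
    have h := hLeib (Ym v) (Ym (-v))
    rw [Ym_inv, hone, hv] at h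
    have h2 : Ym (-v) • Ym v • lmap c i v = lmap c i v := by
      rw [smul_smul, Ym_mul, neg_add_cancel, Ym_zero, one_smul]
    rw [h2] at h
    have h3 : Ym v • S (Ym (-v)) = - lmap c i v :=
      eq_neg_of_add_eq_zero_left h.symm
    have h4 := congrArg (fun z => Ym (-v) • z) h3
    rw [smul_smul, Ym_mul, neg_add_cancel, Ym_zero, one_smul] at h4
    rw [lmap_neg, smul_neg, ← smul_neg]
    exact h4
  have hPs1 : ∀ p : J × ℤ, S (Ym (Finsupp.single p 1)) =
      Ym (Finsupp.single p 1) • lmap c i (Finsupp.single p 1) := by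
    rintro ⟨j, n⟩
    have h := hval j n
    rw [lmap_single]
    by_cases hp : j = i
    · subst hp
      rw [if_pos rfl] at h
      rw [if_pos rfl, one_smul]
      exact h
    · rw [if_neg hp] at h
      rw [if_neg hp, smul_zero]
      exact h
  have hPs : ∀ (p : J × ℤ) (k : ℤ), S (Ym (Finsupp.single p k)) =
      Ym (Finsupp.single p k) • lmap c i (Finsupp.single p k) := by
    intro p k
    have hm1 : S (Ym (Finsupp.single p (-1 : ℤ))) =
        Ym (Finsupp.single p (-1 : ℤ)) • lmap c i (Finsupp.single p (-1 : ℤ)) := by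
      have h := hPneg _ (hPs1 p)
      rwa [← Finsupp.single_neg] at h
    induction k using Int.induction_on with
    | zero => rw [Finsupp.single_zero]; exact hP0
    | succ k ih => rw [Finsupp.single_add]; exact hPadd _ _ ih (hPs1 p)
    | pred k ih =>
      rw [show (-(k : ℤ) - 1) = (-(k : ℤ)) + (-1) by ring, Finsupp.single_add]
      exact hPadd _ _ ih hm1
  induction v using Finsupp.induction with
  | zero => exact hP0
  | single_add p k f _ _ ih => exact hPadd _ _ (hPs p k) ih

include hLeib hval in
theorem S_single (v : LExp J) (a : ℂ) :
    S (AddMonoidAlgebra.single v a : LRing J) = a • (Ym v • lmap c i v) := by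
  have h : (AddMonoidAlgebra.single v a : LRing J) = a • Ym v := by
    rw [Ym, AddMonoidAlgebra.smul_single', mul_one]
  rw [h, map_smul, Smono c i S hLeib hval]

include hLeib hval in
theorem STn (n : ℤ) : S (Ym (E i n 1) * (1 + Ym (-(Aexp c i (n + 1))))) = 0 := by
  have hexp : Ym (E i n 1) * (1 + Ym (-(Aexp c i (n + 1))))
      = Ym (E i n 1) + Ym (E i n 1 + (-(Aexp c i (n + 1)))) := by
    rw [mul_add, mul_one, Ym_mul]
  have hA : Aexp c i (n + 1) = E i (n + 2) 1 + E i n 1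
      - ∑ j ∈ Finset.univ.erase i, E j (n + 1) (c j : ℤ) := by
    rw [Aexp, show n + 1 + 1 = n + 2 by ring, show n + 1 - 1 = n by ring]
  have he2 : E i n 1 + (-(Aexp c i (n + 1)))
      = (- E i (n + 2) 1) + ∑ j ∈ Finset.univ.erase i, E j (n + 1) (c j : ℤ) := by
    rw [hA]; abel
  have hl1 : lmap c i (E i n 1) = ebar (Aexp c i) n := by
    rw [E, lmap_single, if_pos rfl, one_smul]
  have hlsum : lmap c i (∑ j ∈ Finset.univ.erase i, E j (n + 1) (c j : ℤ)) = 0 := by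
    rw [show lmap c i = ⇑(lmapHom c i) from rfl, map_sum]
    refine Finset.sum_eq_zero fun j hj => ?_
    show lmap c i (E j (n + 1) (c j : ℤ)) = 0
    rw [E, lmap_single, if_neg (Finset.mem_erase.mp hj).1]
  have hl2 : lmap c i (E i n 1 + (-(Aexp c i (n + 1)))) = - ebar (Aexp c i) (n + 2) := by
    rw [he2, lmap_add, hlsum, add_zero, show lmap c i = ⇑(lmapHom c i) from rfl, map_neg]
    have h3 : (lmapHom c i) (E i (n + 2) 1) = ebar (Aexp c i) (n + 2) := by
      show lmap c i (E i (n + 2) 1) = _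
      rw [E, lmap_single, if_pos rfl, one_smul]
    rw [h3]
  rw [hexp, map_add, Smono c i S hLeib hval, Smono c i S hLeib hval, hl1, hl2]
  rw [smul_neg, ebar_rec, smul_smul, Ym_mul]
  rw [show E i n 1 + -Aexp c i (n + 1) + Aexp c i (n + 1) = E i n 1 by abel]
  rw [add_neg_cancel]

end Screening

theorem sum_reindex (v : LExp J) (g : ℤ → LRing J) (T : Finset ℤ)
    (hT : ∀ n : ℤ, v (i, n) ≠ 0 → n ∈ T) :
    (v.sum fun p k => if p.1 = i then k • g p.2 else 0) = ∑ n ∈ T, v (i, n) • g n := by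
  classical
  rw [Finsupp.sum]
  rw [show (∑ p ∈ v.support, if p.1 = i then v p • g p.2 else 0)
      = ∑ p ∈ v.support.filter (fun p => p.1 = i), v p • g p.2 from
    (Finset.sum_filter _ _).symm]
  set s := v.support.filter (fun p => p.1 = i) with hs
  have hinj : ∀ x ∈ s, ∀ y ∈ s, x.2 = y.2 → x = y := by
    intro x hx y hy hxy
    have hx1 : x.1 = i := (Finset.mem_filter.mp hx).2
    have hy1 : y.1 = i := (Finset.mem_filter.mp hy).2
    exact Prod.ext (by rw [hx1, hy1]) hxy
  have h2 : ∑ n ∈ s.image Prod.snd, v (i, n) • g n = ∑ p ∈ s, v (i, p.2) • g p.2 :=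
    Finset.sum_image hinj
  have h3 : ∑ p ∈ s, v (i, p.2) • g p.2 = ∑ p ∈ s, v p • g p.2 := by
    refine Finset.sum_congr rfl fun p hp => ?_
    have hp1 : p.1 = i := (Finset.mem_filter.mp hp).2
    rw [show ((i : J), p.2) = p from Prod.ext hp1.symm rfl]
  rw [← h3, ← h2]
  refine Finset.sum_subset ?_ ?_
  · intro n hn
    obtain ⟨p, hp, hpn⟩ := Finset.mem_image.mp hn
    have hp1 : p.1 = i := (Finset.mem_filter.mp hp).2
    have hpv : v p ≠ 0 := Finsupp.mem_support_iff.mp (Finset.mem_filter.mp hp).1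
    apply hT
    rw [show ((i : J), n) = p from Prod.ext hp1.symm hpn.symm]
    exact hpv
  · intro n _ hn
    by_cases hvn : v (i, n) = 0
    · rw [hvn, zero_smul]
    · exfalso
      apply hn
      have hmem : ((i, n) : J × ℤ) ∈ s := by
        rw [hs, Finset.mem_filter]
        exact ⟨Finsupp.mem_support_iff.mpr hvn, rfl⟩
      exact Finset.mem_image.mpr ⟨(i, n), hmem, rfl⟩

section Screening2

variable (S : LRing J →ₗ[ℂ] ScrMod (Aexp c i))
variable (hLeib : ∀ x y : LRing J, S (x * y) = x • S y + y • S x)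
variable (hval : ∀ (j : J) (n : ℤ),
  S (Ym (E j n 1)) = if j = i then Ym (E i n 1) • ebar (Aexp c i) n else 0)

theorem phiq_lmap (N : ℤ) (v : LExp J) (T : Finset ℤ)
    (hT : ∀ n : ℤ, v (i, n) ≠ 0 → n ∈ T) :
    prE (J := J) N (phiq c i (lmap c i v))
      = ∑ n ∈ T, v (i, n) • (if Even (n - N) then Ym (F c i n) else 0) := by
  set Φ := (prE (J := J) N).comp (phiq c i) with hΦ
  have hebar : ∀ n : ℤ, Φ (ebar (Aexp c i) n) = if Even (n - N) then Ym (F c i n) else 0 := by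
    intro n
    rw [hΦ, LinearMap.comp_apply, phiq_ebar, prE_vfun]
  have h1 : Φ (lmap c i v)
      = v.sum fun p k => if p.1 = i then k • (if Even (p.2 - N) then Ym (F c i p.2) else 0) else 0 := by
    rw [lmap, map_finsuppSum]
    refine Finsupp.sum_congr fun p _ => ?_
    by_cases hp : p.1 = i
    · rw [if_pos hp, if_pos hp, map_zsmul, hebar]
    · rw [if_neg hp, if_neg hp, map_zero]
  show Φ (lmap c i v) = _
  rw [h1]
  exact sum_reindex i v (fun n => if Even (n - N) then Ym (F c i n) else 0) T hT

include hLeib hval in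
theorem Eform (N : ℤ) (x : LRing J) (T : Finset ℤ)
    (hT : ∀ v ∈ x.coeff.support, ∀ n : ℤ, v (i, n) ≠ 0 → n ∈ T) :
    prE (J := J) N (phiq c i (S x))
      = ∑ n ∈ T, Th i n x * (if Even (n - N) then Ym (F c i n) else 0) := by
  classical
  revert hT
  induction x using AddMonoidAlgebra.induction with
  | zero =>
    intro hT
    rw [map_zero, map_zero, map_zero]
    exact (Finset.sum_eq_zero fun n _ => by rw [Th_zero, zero_mul]).symm
  | single_add v a f hvf ha0 ih =>
    intro hT
    have hvmem : v ∈ (AddMonoidAlgebra.single v a + f).coeff.support := by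
      rw [Finsupp.mem_support_iff, AddMonoidAlgebra.coeff_add, Finsupp.add_apply,
        AddMonoidAlgebra.coeff_single, Finsupp.single_eq_same,
        Finsupp.notMem_support_iff.mp hvf, add_zero]
      exact ha0
    have hTv : ∀ n : ℤ, v (i, n) ≠ 0 → n ∈ T := fun n hn => hT v hvmem n hn
    have hTf : ∀ w ∈ f.coeff.support, ∀ n : ℤ, w (i, n) ≠ 0 → n ∈ T := by
      intro w hw n hn
      refine hT w ?_ n hn
      have hwv : w ≠ v := fun h => hvf (h ▸ hw)
      rw [Finsupp.mem_support_iff, AddMonoidAlgebra.coeff_add, Finsupp.add_apply,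
        AddMonoidAlgebra.coeff_single, Finsupp.single_eq_of_ne hwv, zero_add]
      exact Finsupp.mem_support_iff.mp hw
    rw [map_add, map_add, map_add]
    rw [ih hTf]
    have hsingle : prE (J := J) N (phiq c i (S (AddMonoidAlgebra.single v a)))
        = ∑ n ∈ T, Th i n (AddMonoidAlgebra.single v a)
            * (if Even (n - N) then Ym (F c i n) else 0) := by
      rw [S_single c i S hLeib hval, LinearMap.map_smul_of_tower,
        LinearMap.map_smul_of_tower, map_smul, map_smul, phiq_lmap c i N v T hTv]
      rw [Finset.smul_sum, Finset.smul_sum]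
      refine Finset.sum_congr rfl fun n _ => ?_
      rw [Th_single]
      have h4 : (AddMonoidAlgebra.single v ((v (i, n) : ℂ) * a) : LRing J)
          = ((v (i, n) : ℂ) * a) • Ym v := by
        rw [Ym, AddMonoidAlgebra.smul_single', mul_one]
      rw [h4, smul_mul_assoc, mul_smul, smul_eq_mul, mul_smul_comm,
        ← Int.cast_smul_eq_zsmul ℂ, smul_comm]
    rw [hsingle]
    rw [← Finset.sum_add_distrib]
    refine Finset.sum_congr rfl fun n _ => ?_
    rw [Th_add, add_mul]

end Screening2

/-! ### Subalgebras defined by support conditions -/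

theorem Th_support (n : ℤ) (x : LRing J) : (Th i n x).coeff.support ⊆ x.coeff.support := by
  intro v hv
  rw [Finsupp.mem_support_iff] at hv ⊢
  rw [Th_apply] at hv
  intro h; rw [h, mul_zero] at hv; exact hv rfl

noncomputable def suppAlg (Q : LExp J → Prop) (hQ0 : Q 0)
    (hQadd : ∀ v w, Q v → Q w → Q (v + w)) : Subalgebra ℂ (LRing J) where
  carrier := {x : LRing J | ∀ v ∈ x.coeff.support, Q v}
  zero_mem' := by simp
  one_mem' := by
    intro v hv
    have h := AddMonoidAlgebra.support_coeff_one_subset hv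
    rw [Finset.mem_zero] at h
    rwa [h]
  add_mem' := by
    intro x y hx hy v hv
    rw [AddMonoidAlgebra.coeff_add] at hv
    rcases Finset.mem_union.mp (Finsupp.support_add hv) with h | h
    · exact hx v h
    · exact hy v h
  mul_mem' := by
    intro x y hx hy v hv
    classical
    obtain ⟨a, ha, b, hb, rfl⟩ := Finset.mem_add.mp (AddMonoidAlgebra.support_coeff_mul_subset x y hv)
    exact hQadd a b (hx a ha) (hy b hb)
  algebraMap_mem' := by
    intro r v hv
    rw [Algebra.algebraMap_eq_smul_one] at hv
    rw [AddMonoidAlgebra.coeff_smul] at hv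
    have h1 := Finsupp.support_smul hv
    have h2 := AddMonoidAlgebra.support_coeff_one_subset h1
    rw [Finset.mem_zero] at h2
    rwa [h2]

theorem mem_suppAlg {Q : LExp J → Prop} {hQ0 : Q 0}
    {hQadd : ∀ v w, Q v → Q w → Q (v + w)} {x : LRing J} :
    x ∈ suppAlg Q hQ0 hQadd ↔ ∀ v ∈ x.coeff.support, Q v := Iff.rfl

theorem Ym_mem_suppAlg {Q : LExp J → Prop} {hQ0 : Q 0}
    {hQadd : ∀ v w, Q v → Q w → Q (v + w)} {v : LExp J} (hv : Q v) :
    Ym v ∈ suppAlg Q hQ0 hQadd := by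
  intro u hu
  have h := Finsupp.support_single_subset hu
  rw [Finset.mem_singleton] at h
  rwa [h]

/-- The subalgebra of elements whose monomials have `(i,N)`-exponent zero. -/
noncomputable def ZA (N : ℤ) : Subalgebra ℂ (LRing J) :=
  suppAlg (fun v => v (i, N) = 0) (by simp)
    (fun v w hv hw => by
      show (v + w) (i, N) = 0
      have hv' : v (i, N) = 0 := hv
      have hw' : w (i, N) = 0 := hw
      rw [Finsupp.add_apply, hv', hw', add_zero])

/-- The subalgebra of elements whose `i`-monomial exponents lie in `[a, b]`. -/
noncomputable def WA (a b : ℤ) : Subalgebra ℂ (LRing J) :=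
  suppAlg (fun v => ∀ m : ℤ, v (i, m) ≠ 0 → a ≤ m ∧ m ≤ b) (by simp)
    (fun v w hv hw => by
      intro m hm
      rw [Finsupp.add_apply] at hm
      by_cases h1 : v (i, m) = 0
      · exact hw m (by omega)
      · exact hv m h1)

theorem WA_le_ZA (a b N : ℤ) (h : b < N) : WA i a b ≤ ZA i N := by
  intro x hx v hv
  by_contra h0
  have := hx v hv N h0
  omega

/-! ### Linear independence of the powers of `t` -/

noncomputable def pkHom (N k : ℤ) : LRing J →+ LRing J :=
  AddMonoidHom.mk' (pk i N k) (pk_add i N k)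

theorem indep (N : ℤ) (w : LExp J) (hw : w (i, N) = 0) (b : LRing J)
    (hb : b ∈ ZA i N) (P : Polynomial (LRing J))
    (hP : ∀ l, P.coeff l ∈ ZA i N)
    (hev : Polynomial.eval (b + Ym w * Ym (Finsupp.single ((i : J), N) (-1 : ℤ))) P = 0) :
    P = 0 := by
  classical
  by_contra hP0
  set L := P.natDegree with hL
  set Xm := Ym (Finsupp.single ((i : J), N) (-1 : ℤ)) with hXm
  set u := Ym w with hu
  have hXmpow : ∀ e : ℕ, Xm ^ e = Ym (Finsupp.single ((i : J), N) (-(e : ℤ))) := by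
    intro e
    rw [hXm, Ym_pow]
    congr 1
    rw [Finsupp.smul_single]
    congr 1
    simp
  have hupow : ∀ e : ℕ, u ^ e ∈ ZA i N := by
    intro e
    rw [hu, Ym_pow]
    exact Ym_mem_suppAlg (by rw [Finsupp.smul_apply, hw, smul_zero])
  have hev2 := hev
  rw [Polynomial.eval_eq_sum_range] at hev2
  have hterm : ∀ l ∈ Finset.range (L + 1),
      P.coeff l * (b + u * Xm) ^ l
        = ∑ m ∈ Finset.range (l + 1),
            (P.coeff l * b ^ m * u ^ (l - m) * ((l.choose m : ℕ) : LRing J))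
              * Ym (Finsupp.single ((i : J), N) (-((l - m : ℕ) : ℤ))) := by
    intro l _
    rw [add_pow, Finset.mul_sum]
    refine Finset.sum_congr rfl fun m _ => ?_
    rw [mul_pow, hXmpow]
    ring
  rw [Finset.sum_congr rfl hterm] at hev2
  have h0 := congrArg (pkHom i N (-(L : ℤ))) hev2
  rw [map_zero, map_sum] at h0
  have hcmem : ∀ l m : ℕ,
      (P.coeff l * b ^ m * u ^ (l - m) * ((l.choose m : ℕ) : LRing J)) ∈ ZA i N :=
    fun l m => mul_mem (mul_mem (mul_mem (hP l) (pow_mem hb m)) (hupow _))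
      (Subalgebra.natCast_mem _ _)
  have hpkterm : ∀ l m : ℕ,
      pk i N (-(L : ℤ)) ((P.coeff l * b ^ m * u ^ (l - m) * ((l.choose m : ℕ) : LRing J))
          * Ym (Finsupp.single ((i : J), N) (-((l - m : ℕ) : ℤ))))
        = (if (-(L : ℤ) + (l - m : ℕ) = 0) then
            (P.coeff l * b ^ m * u ^ (l - m) * ((l.choose m : ℕ) : LRing J))
              * Ym (Finsupp.single ((i : J), N) (-((l - m : ℕ) : ℤ))) else 0) := by
    intro l m
    rw [pk_mul_Ym, Finsupp.single_eq_same]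
    rw [pk_const i N _ 0 _ (hcmem l m), show (-(L:ℤ) - (-((l - m : ℕ) : ℤ))) = -(L:ℤ) + (l-m:ℕ) by ring]
    split_ifs with h
    · rfl
    · rw [zero_mul]
  have hinner : ∀ l ∈ Finset.range (L + 1), l ≠ L →
      (pkHom i N (-(L : ℤ))) (∑ m ∈ Finset.range (l + 1),
        (P.coeff l * b ^ m * u ^ (l - m) * ((l.choose m : ℕ) : LRing J))
          * Ym (Finsupp.single ((i : J), N) (-((l - m : ℕ) : ℤ)))) = 0 := by
    intro l hl hlL
    rw [Finset.mem_range] at hl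
    rw [map_sum]
    refine Finset.sum_eq_zero fun m hm => ?_
    rw [Finset.mem_range] at hm
    show pk i N _ _ = 0
    rw [hpkterm l m, if_neg (by omega)]
  rw [Finset.sum_eq_single_of_mem L (Finset.mem_range.mpr (by omega)) hinner] at h0
  have hinner2 : ∀ m ∈ Finset.range (L + 1), m ≠ 0 →
      (pkHom i N (-(L : ℤ))) ((P.coeff L * b ^ m * u ^ (L - m) * ((L.choose m : ℕ) : LRing J))
        * Ym (Finsupp.single ((i : J), N) (-((L - m : ℕ) : ℤ)))) = 0 := by
    intro m hm hm0
    rw [Finset.mem_range] at hm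
    show pk i N _ _ = 0
    rw [hpkterm L m, if_neg (by omega)]
  rw [map_sum] at h0
  rw [Finset.sum_eq_single_of_mem 0 (Finset.mem_range.mpr (by omega)) hinner2] at h0
  rw [show ((pkHom i N (-(L:ℤ)))
      ((P.coeff L * b ^ 0 * u ^ (L - 0) * ((L.choose 0 : ℕ) : LRing J))
        * Ym (Finsupp.single ((i : J), N) (-((L - 0 : ℕ) : ℤ)))) : LRing J)
      = pk i N (-(L:ℤ)) ((P.coeff L * b ^ 0 * u ^ (L - 0) * ((L.choose 0 : ℕ) : LRing J))
        * Ym (Finsupp.single ((i : J), N) (-((L - 0 : ℕ) : ℤ)))) from rfl, hpkterm L 0,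
    if_pos (by omega)] at h0
  simp only [pow_zero, mul_one, Nat.choose_zero_right, Nat.cast_one, Nat.sub_zero] at h0
  have h1 : P.coeff L * u ^ L = 0 := mul_Ym_eq_zero h0
  rw [hu, Ym_pow] at h1
  have h2 : P.coeff L = 0 := mul_Ym_eq_zero h1
  exact hP0 (Polynomial.leadingCoeff_eq_zero.mp h2)

section Screening3

variable (S : LRing J →ₗ[ℂ] ScrMod (Aexp c i))
variable (hLeib : ∀ x y : LRing J, S (x * y) = x • S y + y • S x)
variable (hval : ∀ (j : J) (n : ℤ),
  S (Ym (E j n 1)) = if j = i then Ym (E i n 1) • ebar (Aexp c i) n else 0)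

include hLeib in
theorem Spow (y : LRing J) (hy : S y = 0) (l : ℕ) : S (y ^ l) = 0 := by
  induction l with
  | zero => rw [pow_zero]; exact S_one c i S hLeib
  | succ l ih => rw [pow_succ, hLeib, ih, hy, smul_zero, smul_zero, add_zero]

theorem sumE_apply (t s : ℤ) :
    (∑ j ∈ Finset.univ.erase i, E j t (c j : ℤ)) (i, s) = 0 := by
  rw [Finsupp.finset_sum_apply]
  refine Finset.sum_eq_zero fun j hj => ?_
  rw [E, Finsupp.single_apply, if_neg]
  intro h
  exact (Finset.mem_erase.mp hj).1 (congrArg Prod.fst h)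

include hLeib hval in
theorem key_step (N a₀ : ℤ) (hA : a₀ + 2 ≤ N) (x : LRing J)
    (hW : x ∈ WA i a₀ N) (hS : phiq c i (S x) = 0) :
    ∃ P : Polynomial (LRing J),
      (∀ l, P.coeff l ∈ WA i a₀ (N - 1)) ∧
      (∀ l, phiq c i (S (P.coeff l)) = 0) ∧
      x = Polynomial.eval (Ym (E i (N - 2) 1) * (1 + Ym (-(Aexp c i (N - 2 + 1))))) P := by
  classical
  set T' := Finset.Icc a₀ (N - 1) with hT'
  set Gm : ℤ → LRing J :=
    fun n => if Even (n - N) then Ym (F c i n - F c i N) else 0 with hGm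
  -- the basic equation, multiplied by `Ym (-F N)`
  have hEqN : ∑ n ∈ Finset.Icc a₀ N, Th i n x
      * (if Even (n - N) then Ym (F c i n) else 0) = 0 := by
    rw [← Eform c i S hLeib hval N x (Finset.Icc a₀ N)
      (fun v hv n hn => Finset.mem_Icc.mpr (hW v hv n hn)), hS, map_zero]
  have hEq2 : Th i N x + ∑ n ∈ T', Th i n x * Gm n = 0 := by
    have h1 := congrArg (fun z => z * Ym (-(F c i N))) hEqN
    simp only [Finset.sum_mul, zero_mul] at h1
    have h2 : ∀ n ∈ Finset.Icc a₀ N,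
        Th i n x * (if Even (n - N) then Ym (F c i n) else 0) * Ym (-(F c i N))
          = Th i n x * Gm n := by
      intro n _
      simp only [hGm]
      by_cases hpar : Even (n - N)
      · rw [if_pos hpar, if_pos hpar, mul_assoc, Ym_mul, sub_eq_add_neg]
      · rw [if_neg hpar, if_neg hpar, mul_zero, zero_mul]
    rw [Finset.sum_congr rfl h2] at h1
    have hIcc : Finset.Icc a₀ N = insert N T' := by
      ext m
      rw [Finset.mem_Icc, Finset.mem_insert, hT', Finset.mem_Icc]
      omega
    rw [hIcc, Finset.sum_insert (by rw [hT', Finset.mem_Icc]; omega)] at h1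
    have hGN : Gm N = 1 := by
      rw [hGm]
      simp only [sub_self, Even.zero, if_pos]
      rw [Ym_zero]
    rw [hGN, mul_one] at h1
    exact h1
  -- coefficient of `x_N` in the monomials `Gm n` is `-1`
  have hGcoord : ∀ n ∈ T', Even (n - N) → (F c i n - F c i N) (i, N) = -1 := by
    intro n hn hpar
    rw [hT', Finset.mem_Icc] at hn
    obtain ⟨m, hm1, hm2⟩ : ∃ m : ℕ, 1 ≤ m ∧ N = n + 2 * m := by
      obtain ⟨r, hr⟩ := hpar
      exact ⟨(-r).toNat, by omega, by omega⟩
    have h1 := Fdiff_apply_top c i n m hm1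
    rw [← hm2] at h1
    rw [Finsupp.sub_apply] at h1 ⊢
    omega
  have hGmul : ∀ n ∈ T', ∀ (k : ℤ) (y : LRing J),
      pk i N k (y * Gm n) = pk i N (k + 1) y * Gm n := by
    intro n hn k y
    simp only [hGm]
    by_cases hpar : Even (n - N)
    · rw [if_pos hpar, pk_mul_Ym, hGcoord n hn hpar,
        show k - (-1 : ℤ) = k + 1 by ring]
    · rw [if_neg hpar, mul_zero, mul_zero, pk_zero]
  -- the recursion in the degree `k`
  have hsuppk : ∀ k : ℤ, ∀ v ∈ (pk i N k x).coeff.support, v (i, N) = k := by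
    intro k v hv
    rw [Finsupp.mem_support_iff, pk_apply] at hv
    by_contra h
    rw [if_neg h] at hv
    exact hv rfl
  have hrec : ∀ k : ℤ,
      (k : ℂ) • pk i N k x + ∑ n ∈ T', Th i n (pk i N (k + 1) x) * Gm n = 0 := by
    intro k
    have h1 := congrArg (pkHom i N k) hEq2
    rw [map_zero, map_add, map_sum] at h1
    have h2 : (pkHom i N k) (Th i N x) = (k : ℂ) • pk i N k x := by
      show pk i N k (Th i N x) = _
      rw [pk_Th, Th_const i N _ k (hsuppk k)]
    have h3 : ∀ n ∈ T', (pkHom i N k) (Th i n x * Gm n)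
        = Th i n (pk i N (k + 1) x) * Gm n := by
      intro n hn
      show pk i N k (Th i n x * Gm n) = _
      rw [hGmul n hn, pk_Th]
    rw [h2, Finset.sum_congr rfl h3] at h1
    exact h1
  -- no positive degrees
  set Ks := x.coeff.support.image (fun v => v (i, N)) with hKs
  have hout : ∀ k : ℤ, k ∉ Ks → pk i N k x = 0 := by
    intro k hk
    refine pk_eq_zero_of_not_mem i N k x fun v hv he => ?_
    exact hk (Finset.mem_image.mpr ⟨v, hv, he⟩)
  set K₀ := ((insert (0 : ℤ) Ks).max' (Finset.insert_nonempty _ _)) + 1 with hK₀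
  have hbig : ∀ k : ℤ, K₀ ≤ k → pk i N k x = 0 := by
    intro k hk
    refine hout k fun hmem => ?_
    have := Finset.le_max' (insert 0 Ks) k (Finset.mem_insert_of_mem hmem)
    omega
  have hneg : ∀ k : ℤ, 1 ≤ k → pk i N k x = 0 := by
    have hdown : ∀ m : ℕ, ∀ k : ℤ, 1 ≤ k → K₀ ≤ k + m → pk i N k x = 0 := by
      intro m
      induction m with
      | zero => intro k h1 h2; exact hbig k (by omega)
      | succ m ih =>
        intro k h1 h2
        by_cases h : K₀ ≤ k + m
        · exact ih k h1 h
        · have hnext : pk i N (k + 1) x = 0 := ih (k + 1) (by omega) (by push_cast; omega)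
          have heq := hrec k
          rw [hnext] at heq
          have hz : ∑ n ∈ T', Th i n (0 : LRing J) * Gm n = 0 :=
            Finset.sum_eq_zero fun n _ => by rw [Th_zero, zero_mul]
          rw [hz, add_zero] at heq
          have hc := congrArg (fun z => ((k : ℂ))⁻¹ • z) heq
          simp only [smul_smul, smul_zero] at hc
          rwa [inv_mul_cancel₀ (Int.cast_ne_zero.mpr (by omega : k ≠ 0)), one_smul] at hc
    intro k hk
    exact hdown (K₀ - k).toNat k hk (by omega)
  -- decomposition of `x` by nonpositive degrees
  set KsN := Ks.filter (fun k => k ≤ 0) with hKsN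
  have hxdec : x = ∑ k ∈ KsN, pk i N k x := by
    have h1 : ∑ k ∈ Ks, pk i N k x = x :=
      pk_sum_eq_self i N x Ks (fun v hv => Finset.mem_image.mpr ⟨v, hv, rfl⟩)
    have h2 : ∑ k ∈ KsN, pk i N k x = ∑ k ∈ Ks, pk i N k x := by
      refine Finset.sum_subset (Finset.filter_subset _ _) fun k hk hk2 => ?_
      refine hneg k ?_
      rw [hKsN, Finset.mem_filter] at hk2
      push_neg at hk2
      have := hk2 hk
      omega
    exact (h2.trans h1).symm
  -- the change of variables
  set sw := ∑ j ∈ Finset.univ.erase i, E j (N - 1) (c j : ℤ) with hsw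
  have hswz : ∀ s : ℤ, sw (i, s) = 0 := fun s => sumE_apply c i (N - 1) s
  set bb := Ym (E i (N - 2) 1) with hbb
  set tt := Ym (E i (N - 2) 1) * (1 + Ym (-(Aexp c i (N - 2 + 1)))) with htt
  have he2 : E i (N - 2) 1 + (-(Aexp c i (N - 2 + 1)))
      = sw + Finsupp.single ((i : J), N) (-1 : ℤ) := by
    rw [show N - 2 + 1 = N - 1 by ring, Aexp, hsw,
      show N - 1 + 1 = N by ring, show N - 1 - 1 = N - 2 by ring,
      show (-1 : ℤ) = -(1 : ℤ) from rfl, Finsupp.single_neg,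
      show Finsupp.single ((i : J), N) (1 : ℤ) = E i N 1 from rfl]
    abel
  have httb : tt = bb + Ym sw * Ym (Finsupp.single ((i : J), N) (-1 : ℤ)) := by
    rw [htt, mul_add, mul_one, Ym_mul, he2, ← Ym_mul, hbb]
  have hXmk : ∀ k : ℤ, k ≤ 0 →
      (Ym (-sw) * (tt - bb)) ^ (-k).toNat = Ym (Finsupp.single ((i : J), N) k) := by
    intro k hk
    rw [httb, add_sub_cancel_left, ← mul_assoc, Ym_mul, neg_add_cancel, Ym_zero, one_mul,
      Ym_pow, Finsupp.smul_single]
    have hval2 : (((-k).toNat : ℤ)) • (-1 : ℤ) = k := by rw [smul_eq_mul]; omega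
    rw [hval2]
  -- the polynomial
  set Pm : Polynomial (LRing J) := ∑ k ∈ KsN,
      Polynomial.C (pk i N k x * Ym (Finsupp.single ((i : J), N) (-k)))
        * (Polynomial.C (Ym (-sw)) * (Polynomial.X - Polynomial.C bb)) ^ (-k).toNat
    with hPm
  have heval : Polynomial.eval tt Pm = x := by
    rw [hPm, Polynomial.eval_finset_sum]
    refine Eq.trans (Finset.sum_congr rfl fun k hk => ?_) hxdec.symm
    have hk0 : k ≤ 0 := by
      rw [hKsN, Finset.mem_filter] at hk
      exact hk.2
    rw [Polynomial.eval_mul, Polynomial.eval_C, Polynomial.eval_pow, Polynomial.eval_mul,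
      Polynomial.eval_C, Polynomial.eval_sub, Polynomial.eval_X, Polynomial.eval_C]
    rw [hXmk k hk0, mul_assoc, Ym_mul, ← Finsupp.single_add, neg_add_cancel,
      Finsupp.single_zero, Ym_zero, mul_one]
  -- membership of the coefficients
  have hcoeffSA : ∀ (SA : Subalgebra ℂ (LRing J)), bb ∈ SA → Ym (-sw) ∈ SA →
      (∀ k ∈ KsN, pk i N k x * Ym (Finsupp.single ((i : J), N) (-k)) ∈ SA) →
      ∀ l, Pm.coeff l ∈ SA := by
    intro SA h1 h2 h3 l
    rw [hPm, Polynomial.finset_sum_coeff]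
    refine sum_mem fun k hk => ?_
    rw [Polynomial.coeff_C_mul]
    refine mul_mem (h3 k hk) ?_
    have hQ : ∀ (m l' : ℕ),
        ((Polynomial.C (Ym (-sw)) * (Polynomial.X - Polynomial.C bb)) ^ m).coeff l' ∈ SA := by
      intro m
      induction m with
      | zero =>
        intro l'
        rw [pow_zero, Polynomial.coeff_one]
        split_ifs
        · exact one_mem _
        · exact zero_mem _
      | succ m ih =>
        intro l'
        rw [pow_succ, Polynomial.coeff_mul]
        refine sum_mem fun p _ => ?_
        refine mul_mem (ih p.1) ?_
        rw [Polynomial.coeff_C_mul]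
        refine mul_mem h2 ?_
        rw [Polynomial.coeff_sub, Polynomial.coeff_X, Polynomial.coeff_C]
        refine sub_mem ?_ ?_
        · split_ifs
          · exact one_mem _
          · exact zero_mem _
        · split_ifs
          · exact h1
          · exact zero_mem _
    exact hQ _ l
  have hbbW : bb ∈ WA i a₀ (N - 1) := by
    rw [hbb]
    refine Ym_mem_suppAlg ?_
    intro m hm
    rw [E, Finsupp.single_apply] at hm
    by_cases h : ((i : J), N - 2) = ((i : J), m)
    · have := congrArg Prod.snd h
      simp only at this
      omega
    · rw [if_neg h] at hm
      exact absurd rfl hm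
  have huW : Ym (-sw) ∈ WA i a₀ (N - 1) := by
    refine Ym_mem_suppAlg ?_
    intro m hm
    rw [Finsupp.neg_apply, hswz m, neg_zero] at hm
    exact absurd rfl hm
  have hgkW : ∀ k ∈ KsN, pk i N k x * Ym (Finsupp.single ((i : J), N) (-k))
      ∈ WA i a₀ (N - 1) := by
    intro k _
    intro v hv
    obtain ⟨v₁, hv₁, v₂, hv₂, rfl⟩ :=
      Finset.mem_add.mp (AddMonoidAlgebra.support_coeff_mul_subset _ _ hv)
    have hv₂' : v₂ = Finsupp.single ((i : J), N) (-k) := by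
      have h := Finsupp.support_single_subset hv₂
      rwa [Finset.mem_singleton] at h
    subst hv₂'
    have hv₁x : v₁ ∈ x.coeff.support := pk_support i N k x hv₁
    have hv₁N : v₁ (i, N) = k := hsuppk k v₁ hv₁
    intro m hm
    rw [Finsupp.add_apply] at hm
    by_cases hmN : m = N
    · subst hmN
      rw [hv₁N, Finsupp.single_eq_same] at hm
      omega
    · rw [Finsupp.single_apply, if_neg (fun h => hmN (congrArg Prod.snd h).symm)] at hm
      rw [add_zero] at hm
      have := hW v₁ hv₁x m hm
      omega
  have hcoeffW : ∀ l, Pm.coeff l ∈ WA i a₀ (N - 1) :=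
    hcoeffSA (WA i a₀ (N - 1)) hbbW huW hgkW
  have hbbZ : bb ∈ ZA i N := by
    rw [hbb]
    refine Ym_mem_suppAlg ?_
    show (E i (N - 2) 1) (i, N) = 0
    have hne : ¬ (((i : J), N - 2) = ((i : J), N)) := fun h => by
      have := congrArg Prod.snd h
      simp only at this
      omega
    rw [E, Finsupp.single_apply, if_neg hne]
  have hSt : S tt = 0 := by rw [htt]; exact STn c i S hLeib hval (N - 2)
  have hphiqS : ∀ N' : ℤ, ∑ l ∈ Finset.range (Pm.natDegree + 1),
      tt ^ l * prE (J := J) N' (phiq c i (S (Pm.coeff l))) = 0 := by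
    intro N'
    have h1 : S x = ∑ l ∈ Finset.range (Pm.natDegree + 1), tt ^ l • S (Pm.coeff l) := by
      have hx2 : x = ∑ l ∈ Finset.range (Pm.natDegree + 1), Pm.coeff l * tt ^ l := by
        conv_lhs => rw [← heval]
        rw [Polynomial.eval_eq_sum_range]
      rw [hx2, map_sum]
      refine Finset.sum_congr rfl fun l _ => ?_
      rw [hLeib, Spow c i S hLeib tt hSt l, smul_zero, zero_add]
    have h3 : prE (J := J) N' (phiq c i (S x)) = 0 := by rw [hS, map_zero]
    rw [h1, map_sum, map_sum] at h3
    rw [← h3]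
    refine Finset.sum_congr rfl fun l _ => ?_
    rw [map_smul, map_smul, smul_eq_mul]
  have hvanish : ∀ (N' : ℤ) (l : ℕ), prE (J := J) N' (phiq c i (S (Pm.coeff l))) = 0 := by
    intro N'
    obtain ⟨n₀, hn₀p, hn₀le⟩ : ∃ n₀ : ℤ, Even (n₀ - N') ∧ n₀ ≤ a₀ :=
      ⟨N' - 2 * (N' - a₀).natAbs, ⟨-((N' - a₀).natAbs : ℤ), by omega⟩, by omega⟩
    have hclZ : ∀ l, Ym (-(F c i n₀)) * prE (J := J) N' (phiq c i (S (Pm.coeff l))) ∈ ZA i N := by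
      intro l
      have hTl : ∀ v ∈ (Pm.coeff l).coeff.support, ∀ n : ℤ, v (i, n) ≠ 0 →
          n ∈ Finset.Icc a₀ (N - 1) :=
        fun v hv n hn => Finset.mem_Icc.mpr (hcoeffW l v hv n hn)
      rw [Eform c i S hLeib hval N' (Pm.coeff l) _ hTl, Finset.mul_sum]
      refine sum_mem fun n hn => ?_
      rw [Finset.mem_Icc] at hn
      by_cases hpar : Even (n - N')
      · rw [if_pos hpar]
        rw [show Ym (-(F c i n₀)) * (Th i n (Pm.coeff l) * Ym (F c i n))
            = Th i n (Pm.coeff l) * Ym (F c i n - F c i n₀) by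
          rw [mul_comm (Ym (-(F c i n₀))), mul_assoc, Ym_mul, sub_eq_add_neg]]
        refine mul_mem ?_ ?_
        · intro v hv
          exact WA_le_ZA i a₀ (N - 1) N (by omega) (hcoeffW l) v (Th_support i n _ hv)
        · refine Ym_mem_suppAlg ?_
          show (F c i n - F c i n₀) (i, N) = 0
          obtain ⟨m, hm⟩ : ∃ m : ℕ, n = n₀ + 2 * (m : ℤ) := by
            obtain ⟨r, hr⟩ := hpar
            obtain ⟨s, hs⟩ := hn₀p
            exact ⟨(r - s).toNat, by omega⟩
          rw [hm]
          exact Fdiff_apply_high c i n₀ m N (by omega)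
      · rw [if_neg hpar, mul_zero, mul_zero]
        exact zero_mem _
    set Qp : Polynomial (LRing J) := ∑ l ∈ Finset.range (Pm.natDegree + 1),
        Polynomial.C (Ym (-(F c i n₀)) * prE (J := J) N' (phiq c i (S (Pm.coeff l))))
          * Polynomial.X ^ l with hQp
    have hQcoeff : ∀ l, Qp.coeff l ∈ ZA i N := by
      intro l
      rw [hQp, Polynomial.finset_sum_coeff]
      refine sum_mem fun l' _ => ?_
      rw [Polynomial.coeff_C_mul, Polynomial.coeff_X_pow]
      split_ifs
      · rw [mul_one]; exact hclZ l'
      · rw [mul_zero]; exact zero_mem _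
    have hQev : Polynomial.eval tt Qp = 0 := by
      rw [hQp, Polynomial.eval_finset_sum]
      have h4 : ∀ l ∈ Finset.range (Pm.natDegree + 1),
          Polynomial.eval tt (Polynomial.C (Ym (-(F c i n₀))
              * prE (J := J) N' (phiq c i (S (Pm.coeff l)))) * Polynomial.X ^ l)
            = Ym (-(F c i n₀))
              * (tt ^ l * prE (J := J) N' (phiq c i (S (Pm.coeff l)))) := by
        intro l _
        rw [Polynomial.eval_mul, Polynomial.eval_C, Polynomial.eval_pow, Polynomial.eval_X]
        ring
      rw [Finset.sum_congr rfl h4, ← Finset.mul_sum, hphiqS N', mul_zero]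
    have hQ0 : Qp = 0 := by
      refine indep i N sw (hswz N) bb hbbZ Qp hQcoeff ?_
      rw [← httb]
      exact hQev
    intro l
    by_cases hl : l < Pm.natDegree + 1
    · have hql : Qp.coeff l = Ym (-(F c i n₀)) * prE (J := J) N' (phiq c i (S (Pm.coeff l))) := by
        rw [hQp, Polynomial.finset_sum_coeff]
        rw [Finset.sum_eq_single_of_mem l (Finset.mem_range.mpr hl)]
        · rw [Polynomial.coeff_C_mul, Polynomial.coeff_X_pow, if_pos rfl, mul_one]
        · intro l' _ hl'
          rw [Polynomial.coeff_C_mul, Polynomial.coeff_X_pow,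
            if_neg (fun h => hl' h.symm), mul_zero]
      have h5 : Ym (-(F c i n₀)) * prE (J := J) N' (phiq c i (S (Pm.coeff l))) = 0 := by
        rw [← hql, hQ0, Polynomial.coeff_zero]
      rw [mul_comm] at h5
      exact mul_Ym_eq_zero h5
    · have hz : Pm.coeff l = 0 := Polynomial.coeff_eq_zero_of_natDegree_lt (by omega)
      rw [hz, map_zero, map_zero, map_zero]
  exact ⟨Pm, hcoeffW, fun l => prE_eq_zero N _ (hvanish N l) (hvanish (N + 1) l), heval.symm⟩

end Screening3

/-! ### The generating set and the main induction -/

noncomputable def gens : Set (LRing J) :=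
  (⋃ (j : J) (_ : j ≠ i) (n : ℤ), {Ym (E j n 1), Ym (E j n (-1))}) ∪
    (⋃ n : ℤ, {Ym (E i n 1) * (1 + Ym (-(Aexp c i (n + 1))))})

theorem Ym_single_mem (p : J × ℤ) (hp : p.1 ≠ i) (b : ℤ) :
    Ym (Finsupp.single p b) ∈ Algebra.adjoin ℂ (gens c i) := by
  have h1 : Ym (E p.1 p.2 1) ∈ Algebra.adjoin ℂ (gens c i) := by
    refine Algebra.subset_adjoin (Or.inl ?_)
    exact Set.mem_iUnion.mpr ⟨p.1, Set.mem_iUnion.mpr ⟨hp,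
      Set.mem_iUnion.mpr ⟨p.2, Or.inl rfl⟩⟩⟩
  have h2 : Ym (E p.1 p.2 (-1)) ∈ Algebra.adjoin ℂ (gens c i) := by
    refine Algebra.subset_adjoin (Or.inl ?_)
    exact Set.mem_iUnion.mpr ⟨p.1, Set.mem_iUnion.mpr ⟨hp,
      Set.mem_iUnion.mpr ⟨p.2, Or.inr rfl⟩⟩⟩
  have hE1 : E p.1 p.2 (1 : ℤ) = Finsupp.single p 1 := rfl
  have hE2 : E p.1 p.2 (-1 : ℤ) = Finsupp.single p (-1) := rfl
  rcases le_or_gt 0 b with hb | hb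
  · have h3 : Ym (Finsupp.single p b) = Ym (E p.1 p.2 1) ^ b.toNat := by
      rw [hE1, Ym_pow, Finsupp.smul_single, smul_eq_mul, mul_one]
      congr 2
      omega
    rw [h3]; exact pow_mem h1 _
  · have h3 : Ym (Finsupp.single p b) = Ym (E p.1 p.2 (-1)) ^ (-b).toNat := by
      rw [hE2, Ym_pow, Finsupp.smul_single, smul_eq_mul]
      congr 2
      omega
    rw [h3]; exact pow_mem h2 _

theorem Ym_mem_adjoin (v : LExp J) :
    (∀ n : ℤ, v (i, n) = 0) → Ym v ∈ Algebra.adjoin ℂ (gens c i) := by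
  induction v using Finsupp.induction with
  | zero => intro _; rw [Ym_zero]; exact one_mem _
  | single_add p b f hpf hb ih =>
    intro hv
    by_cases hp : p.1 = i
    · exfalso
      have h := hv p.2
      have hip : ((i : J), p.2) = p := by rw [← hp]
      rw [Finsupp.add_apply, hip, Finsupp.single_eq_same,
        Finsupp.notMem_support_iff.mp hpf, add_zero] at h
      exact hb h
    · have hf : ∀ n : ℤ, f (i, n) = 0 := by
        intro n
        have h := hv n
        rw [Finsupp.add_apply, Finsupp.single_apply,
          if_neg (fun hh : p = ((i : J), n) => hp (congrArg Prod.fst hh)), zero_add] at h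
        exact h
      rw [← Ym_mul]
      exact mul_mem (Ym_single_mem c i p hp b) (ih hf)

theorem mem_of_Th_zero (x : LRing J) (hTh : ∀ n : ℤ, Th i n x = 0) :
    x ∈ Algebra.adjoin ℂ (gens c i) := by
  have hall : ∀ v ∈ x.coeff.support, ∀ n : ℤ, v (i, n) = 0 := by
    intro v hv n
    have h0 : (Th i n x).coeff v = 0 := by rw [hTh n]; rfl
    rw [Th_apply] at h0
    have hxv : x.coeff v ≠ 0 := Finsupp.mem_support_iff.mp hv
    rcases mul_eq_zero.mp h0 with h | h
    · exact_mod_cast h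
    · exact absurd h hxv
  have hx : x = ∑ v ∈ x.coeff.support, AddMonoidAlgebra.single v (x.coeff v) :=
    (AddMonoidAlgebra.sum_coeff_single x).symm
  rw [hx]
  refine sum_mem fun v hv => ?_
  have h1 : (AddMonoidAlgebra.single v (x.coeff v) : LRing J) = x.coeff v • Ym v := by
    rw [Ym, AddMonoidAlgebra.smul_single', mul_one]
  rw [h1]
  exact Subalgebra.smul_mem _ (Ym_mem_adjoin c i v (hall v hv)) _

section Screening4

variable (S : LRing J →ₗ[ℂ] ScrMod (Aexp c i))
variable (hLeib : ∀ x y : LRing J, S (x * y) = x • S y + y • S x)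
variable (hval : ∀ (j : J) (n : ℤ),
  S (Ym (E j n 1)) = if j = i then Ym (E i n 1) • ebar (Aexp c i) n else 0)

include hLeib hval in
theorem main_ind (k : ℕ) : ∀ (a₀ : ℤ) (x : LRing J), x ∈ WA i a₀ (a₀ + (k : ℤ) - 1) →
    phiq c i (S x) = 0 → x ∈ Algebra.adjoin ℂ (gens c i) := by
  induction k using Nat.strong_induction_on with
  | _ k ih =>
  intro a₀ x hW hS
  by_cases hk : k ≤ 2
  · have hbound : ∀ v ∈ x.coeff.support, ∀ m : ℤ, v (i, m) ≠ 0 → m ∈ Finset.Icc a₀ (a₀ + 1) := by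
      intro v hv m hm
      have := hW v hv m hm
      rw [Finset.mem_Icc]
      omega
    have hTh : ∀ n : ℤ, Th i n x = 0 := by
      have hIcc : Finset.Icc a₀ (a₀ + 1) = insert a₀ {a₀ + 1} := by
        ext m; rw [Finset.mem_Icc, Finset.mem_insert, Finset.mem_singleton]; omega
      have hEqf : ∀ N' : ℤ, Th i a₀ x * (if Even (a₀ - N') then Ym (F c i a₀) else 0)
          + Th i (a₀ + 1) x * (if Even (a₀ + 1 - N') then Ym (F c i (a₀ + 1)) else 0) = 0 := by
        intro N'
        have h := Eform c i S hLeib hval N' x (Finset.Icc a₀ (a₀ + 1)) hbound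
        rw [hS, map_zero] at h
        rw [hIcc, Finset.sum_insert (by rw [Finset.mem_singleton]; omega),
          Finset.sum_singleton] at h
        exact h.symm
      have h0 : Th i a₀ x = 0 := by
        have h := hEqf a₀
        have hc1 : Even (a₀ - a₀) := ⟨0, by ring⟩
        have hc2 : ¬ Even (a₀ + 1 - a₀) := fun hh => by obtain ⟨r, hr⟩ := hh; omega
        rw [if_pos hc1, if_neg hc2, mul_zero, add_zero] at h
        exact mul_Ym_eq_zero h
      have h1 : Th i (a₀ + 1) x = 0 := by
        have h := hEqf (a₀ + 1)
        have hc1 : ¬ Even (a₀ - (a₀ + 1)) := fun hh => by obtain ⟨r, hr⟩ := hh; omega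
        have hc2 : Even (a₀ + 1 - (a₀ + 1)) := ⟨0, by ring⟩
        rw [if_neg hc1, if_pos hc2, mul_zero, zero_add] at h
        exact mul_Ym_eq_zero h
      intro n
      by_cases hn0 : n = a₀
      · rwa [hn0]
      by_cases hn1 : n = a₀ + 1
      · rwa [hn1]
      refine Th_eq_zero_of i n x fun v hv => ?_
      by_contra h
      have := hW v hv n h
      omega
    exact mem_of_Th_zero c i x hTh
  · push_neg at hk
    set N := a₀ + (k : ℤ) - 1 with hN
    have hA : a₀ + 2 ≤ N := by omega
    obtain ⟨P, hPW, hPS, hPev⟩ :=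
      key_step c i S hLeib hval N a₀ hA x hW hS
    rw [hPev, Polynomial.eval_eq_sum_range]
    refine sum_mem fun l _ => ?_
    refine mul_mem ?_ (pow_mem ?_ l)
    · refine ih (k - 1) (by omega) a₀ (P.coeff l) ?_ (hPS l)
      have hcast : a₀ + ((k - 1 : ℕ) : ℤ) - 1 = N - 1 := by
        rw [hN]; push_cast; omega
      rw [hcast]
      exact hPW l
    · refine Algebra.subset_adjoin (Or.inr ?_)
      exact Set.mem_iUnion.mpr ⟨N - 2, rfl⟩

include hLeib hval in
theorem ker_adjoin (x : LRing J) (hx : x ∈ Algebra.adjoin ℂ (gens c i)) : S x = 0 := by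
  let K0 : Subalgebra ℂ (LRing J) :=
  { carrier := {y : LRing J | S y = 0}
    zero_mem' := map_zero S
    one_mem' := S_one c i S hLeib
    add_mem' := fun {a b} ha hb => by
      show S (a + b) = 0
      rw [map_add, show S a = 0 from ha, show S b = 0 from hb, add_zero]
    mul_mem' := fun {a b} ha hb => by
      show S (a * b) = 0
      rw [hLeib, show S a = 0 from ha, show S b = 0 from hb, smul_zero, smul_zero, add_zero]
    algebraMap_mem' := fun r => by
      show S (algebraMap ℂ (LRing J) r) = 0
      rw [Algebra.algebraMap_eq_smul_one, map_smul, S_one c i S hLeib, smul_zero] }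
  have hgen : gens c i ⊆ K0 := by
    rintro y (hy | hy)
    · obtain ⟨j, hj⟩ := Set.mem_iUnion.mp hy
      obtain ⟨hji, hy2⟩ := Set.mem_iUnion.mp hj
      obtain ⟨n, hy3⟩ := Set.mem_iUnion.mp hy2
      rcases Set.mem_insert_iff.mp hy3 with h | h
      · show S y = 0
        rw [h, hval j n, if_neg hji]
      · rw [Set.mem_singleton_iff] at h
        show S y = 0
        rw [h, Smono c i S hLeib hval, show E j n (-1 : ℤ) = Finsupp.single (j, n) (-1) from rfl,
          lmap_single, if_neg hji, smul_zero]
    · obtain ⟨n, hy2⟩ := Set.mem_iUnion.mp hy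
      rw [Set.mem_singleton_iff] at hy2
      show S y = 0
      rw [hy2]
      exact STn c i S hLeib hval n
  exact Algebra.adjoin_le hgen hx

end Screening4

end Scr


/-- The kernel of the screening operator `S_i^−` (a `ℂ`-linear derivation
with `S_i^−(Y_{j,n}) = δ_{ij} Y_{i,n} ē_n`) equals the `ℂ`-subalgebra of the Laurent
polynomial ring generated by the `Y_{j,n}^{±1}`, `j ≠ i`, together with the elements
`Y_{i,n}(1 + A_{i,n+1}^{−1})`. -/
theorem stmt3 {J : Type} [Fintype J] [DecidableEq J] (i : J)
    (c : J → ℕ) (hc : c i = 0)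
    (S : LRing J →ₗ[ℂ] ScrMod (Aexp c i))
    (hLeib : ∀ x y : LRing J, S (x * y) = x • S y + y • S x)
    (hval : ∀ (j : J) (n : ℤ),
      S (Ym (E j n 1)) = if j = i then Ym (E i n 1) • ebar (Aexp c i) n else 0) :
    ∀ x : LRing J, S x = 0 ↔ x ∈ Algebra.adjoin ℂ
      ((⋃ (j : J) (_ : j ≠ i) (n : ℤ), {Ym (E j n 1), Ym (E j n (-1))}) ∪
        (⋃ n : ℤ, {Ym (E i n 1) * (1 + Ym (-(Aexp c i (n + 1))))}) : Set (LRing J)) := by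
  intro x
  constructor
  · intro hSx
    classical
    set B := x.coeff.support.biUnion (fun v => v.support.image Prod.snd) with hB
    have hbound : ∀ v ∈ x.coeff.support, ∀ m : ℤ, v (i, m) ≠ 0 → m ∈ B := by
      intro v hv m hm
      exact Finset.mem_biUnion.mpr ⟨v, hv,
        Finset.mem_image.mpr ⟨(i, m), Finsupp.mem_support_iff.mpr hm, rfl⟩⟩
    set B' := insert (0 : ℤ) B with hB'
    have hB'ne : B'.Nonempty := ⟨0, Finset.mem_insert_self _ _⟩
    set a₀ := B'.min' hB'ne with ha₀
    set b₁ := B'.max' hB'ne with hb₁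
    have hab : a₀ ≤ b₁ := Finset.min'_le _ _ (Finset.max'_mem _ _)
    set k := (b₁ - a₀ + 1).toNat with hk
    have hxW : x ∈ Scr.WA i a₀ (a₀ + (k : ℤ) - 1) := by
      intro v hv m hm
      have hmB : m ∈ B' := Finset.mem_insert_of_mem (hbound v hv m hm)
      have h1 := Finset.min'_le B' m hmB
      have h2 := Finset.le_max' B' m hmB
      omega
    exact Scr.main_ind c i S hLeib hval k a₀ x hxW (by rw [hSx, map_zero])
  · intro hx
    exact Scr.ker_adjoin c i S hLeib hval x hx
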